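/- Let C be a regular, irreducible curve that is projective over a field k with H^0(C, O_C) = k, with function field F = k(C) and arithmetic genus t. Let D be a divisor on C of degree e ≥ 1, let n be the smallest integer such that n·e > 2t + e − 2, and set S̃ = |D| ∪ { P in C : H^0(C, O_C(nD − P)) ≠ {0} }. Then for every n' ≥ 3, the map K^M_{n'}(F) → ∐_{P ∉ S̃} K^M_{n'−1}(k(P)) induced by the tame symbol on Milnor K-theory is surjective. -/

import Mathlib

open scoped TensorProduct

noncomputable section

/-- The set of Steinberg relations in `Fˣ ⊗_ℤ Fˣ` (written additively):
the elements `a ⊗ b` with `a + b = 1` in `F`. -/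
def SteinbergSet (F : Type*) [Field F] :
    Set (TensorProduct ℤ (Additive Fˣ) (Additive Fˣ)) :=
  { x | ∃ a b : Fˣ, (a : F) + (b : F) = 1 ∧
      x = Additive.ofMul a ⊗ₜ[ℤ] Additive.ofMul b }

/-- Milnor's `K₂` of a field, via Matsumoto's presentation. -/
abbrev K2 (F : Type*) [Field F] :=
  (TensorProduct ℤ (Additive Fˣ) (Additive Fˣ)) ⧸
    Submodule.span ℤ (SteinbergSet F)

/-- The symbol `{f, g}` in `K₂(F)`. -/
def symbol {F : Type*} [Field F] (f g : Fˣ) : K2 F :=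
  Submodule.Quotient.mk (Additive.ofMul f ⊗ₜ[ℤ] Additive.ofMul g)

/-- The degree of a divisor `D` on the curve: `∑_P deg(P) · D(P)`,
where `deg P = [k(P) : k]`. -/
def divDeg (k : Type*) [Field k] {Pt : Type*} (res : Pt → Type*)
    [∀ P, Field (res P)] [∀ P, Algebra k (res P)] (D : Pt →₀ ℤ) : ℤ :=
  ∑ᶠ P, (Module.finrank k (res P) : ℤ) * D P

/-- Axioms for a regular, irreducible curve `C`, projective over a field `k`, with
`H⁰(C, O_C) = k`, presented through: its function field `F = k(C)`, its set `Pt` of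
closed points, the residue fields `res P = k(P)`, the normalized valuations `ord P`,
the evaluation maps `ev P` (evaluation at `P` of functions regular at `P`), the
Riemann-Roch spaces `L D = H⁰(C, O_C(D))`, and the arithmetic genus
`t = dim_k H¹(C, O_C)`, characterized by the Riemann-Roch relations. -/
structure IsProjCurve (k F : Type*) [Field k] [Field F] [Algebra k F]
    {Pt : Type*} (res : Pt → Type*) [∀ P, Field (res P)] [∀ P, Algebra k (res P)]
    (ord : Pt → F → ℤ) (ev : ∀ P, F → res P)
    (L : (Pt →₀ ℤ) → Submodule k F) (t : ℕ) : Prop where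
  finiteDimensional_res : ∀ P, FiniteDimensional k (res P)
  ord_mul : ∀ P (f g : F), f ≠ 0 → g ≠ 0 → ord P (f * g) = ord P f + ord P g
  ord_add : ∀ P (f g : F), f ≠ 0 → g ≠ 0 → f + g ≠ 0 →
      min (ord P f) (ord P g) ≤ ord P (f + g)
  ord_algebraMap : ∀ P (c : k), c ≠ 0 → ord P (algebraMap k F c) = 0
  ord_uniformizer : ∀ P, ∃ f : F, f ≠ 0 ∧ ord P f = 1
  ord_separates : ∀ P Q, (∀ f : F, ord P f = ord Q f) → P = Q
  support_finite : ∀ f : F, f ≠ 0 → {P | ord P f ≠ 0}.Finite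
  degree_formula : ∀ f : F, f ≠ 0 →
      ∑ᶠ P, (Module.finrank k (res P) : ℤ) * ord P f = 0
  ev_zero : ∀ P, ev P 0 = 0
  ev_one : ∀ P, ev P 1 = 1
  ev_add : ∀ P (f g : F), f ≠ 0 → g ≠ 0 → 0 ≤ ord P f → 0 ≤ ord P g →
      ev P (f + g) = ev P f + ev P g
  ev_mul : ∀ P (f g : F), f ≠ 0 → g ≠ 0 → 0 ≤ ord P f → 0 ≤ ord P g →
      ev P (f * g) = ev P f * ev P g
  ev_algebraMap : ∀ P (c : k), ev P (algebraMap k F c) = algebraMap k (res P) c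
  ev_eq_zero_iff : ∀ P (f : F), f ≠ 0 → 0 ≤ ord P f → (ev P f = 0 ↔ 0 < ord P f)
  ev_surjective : ∀ P (y : res P), ∃ f : F, f ≠ 0 ∧ 0 ≤ ord P f ∧ ev P f = y
  mem_L : ∀ (D : Pt →₀ ℤ) (f : F), f ∈ L D ↔ (f ≠ 0 → ∀ P, 0 ≤ D P + ord P f)
  finiteDimensional_L : ∀ D, FiniteDimensional k (L D)
  global_sections : ∀ f : F, f ∈ L 0 ↔ ∃ c : k, algebraMap k F c = f
  rr_ineq : ∀ D : Pt →₀ ℤ,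
      divDeg k res D + 1 - t ≤ (Module.finrank k (L D) : ℤ)
  rr_eq : ∀ D : Pt →₀ ℤ, 2 * (t : ℤ) - 2 < divDeg k res D →
      (Module.finrank k (L D) : ℤ) = divDeg k res D + 1 - t

/-- `T` is the tame symbol `K₂(F) → ∐_{P} k(P)^*`: it is determined by
`T_P({f,g}) = (-1)^{ord_P(f)·ord_P(g)} (f^{ord_P(g)} / g^{ord_P(f)})(P)`. -/
def IsTameSymbol {F : Type*} [Field F] {Pt : Type*} {res : Pt → Type*}
    [∀ P, Field (res P)]
    (ord : Pt → F → ℤ) (ev : ∀ P, F → res P)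
    (T : K2 F →+ Π₀ P : Pt, Additive ((res P)ˣ)) : Prop :=
  ∀ (f g : Fˣ) (P : Pt),
    ((Additive.toMul (T (symbol f g) P) : (res P)ˣ) : res P) =
      ev P (((-1 : Fˣ) ^ (ord P (f : F) * ord P (g : F)) *
        f ^ (ord P (g : F)) * g ^ (-ord P (f : F)) : Fˣ) : F)

/-- The Steinberg relations in the `n`-fold tensor power of `Fˣ`. -/
def MilnorSteinberg (n : ℕ) (F : Type) [Field F] :
    Set (PiTensorProduct ℤ (fun _ : Fin n => Additive Fˣ)) :=
  { x | ∃ (a : Fin n → Fˣ) (i j : Fin n), i ≠ j ∧ (a i : F) + (a j : F) = 1 ∧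
      x = PiTensorProduct.tprod ℤ (fun i => Additive.ofMul (a i)) }

/-- Milnor K-theory `K^M_n(F)` of a field `F`, via its standard presentation. -/
def MilnorK (n : ℕ) (F : Type) [Field F] :=
  PiTensorProduct ℤ (fun _ : Fin n => Additive Fˣ) ⧸
    Submodule.span ℤ (MilnorSteinberg n F)

instance (n : ℕ) (F : Type) [Field F] : AddCommGroup (MilnorK n F) :=
  inferInstanceAs (AddCommGroup (PiTensorProduct ℤ (fun _ : Fin n => Additive Fˣ) ⧸
    Submodule.span ℤ (MilnorSteinberg n F)))

/-- The Milnor symbol `{a 0, …, a (n-1)}` in `K^M_n(F)`. -/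
def milnorSymbol {n : ℕ} {F : Type} [Field F] (a : Fin n → Fˣ) : MilnorK n F :=
  Submodule.Quotient.mk (PiTensorProduct.tprod ℤ (fun i => Additive.ofMul (a i)))

/-- `bd` is the tame symbol (boundary map) `K^M_{m+1}(F) → K^M_m(K)` associated to a
discrete valuation `v` on `F` with residue field `K` and reduction map `ev`: it is the
unique homomorphism killing symbols of units and sending `{u₁, …, u_m, π}` to
`{ū₁, …, ū_m}` for a uniformizer `π` and units `uᵢ`. -/
def IsMilnorBoundary {F : Type} [Field F] {K : Type} [Field K] {m : ℕ}
    (v : F → ℤ) (ev : F → K)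
    (bd : MilnorK (m + 1) F →+ MilnorK m K) : Prop :=
  (∀ a : Fin (m + 1) → Fˣ, (∀ i, v (a i) = 0) → bd (milnorSymbol a) = 0) ∧
  (∀ (u : Fin m → Fˣ) (π : Fˣ), v (π : F) = 1 → (∀ i, v (u i : F) = 0) →
    ∀ w : Fin m → Kˣ, (∀ i, (w i : K) = ev (u i : F)) →
      bd (milnorSymbol (Fin.snoc u π)) = milnorSymbol w)

section MilnorAlgebra

variable {K : Type} [Field K] {m : ℕ}

private lemma ofMul_comp_update (a : Fin m → Kˣ) (i : Fin m) (x : Kˣ) :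
    (fun j => Additive.ofMul ((Function.update a i x) j)) =
      Function.update (fun j => Additive.ofMul (a j)) i (Additive.ofMul x) := by
  funext j
  by_cases h : j = i
  · subst h; simp
  · simp [Function.update_of_ne h]

private lemma milnorSymbol_update_mul (a : Fin m → Kˣ) (i : Fin m) (b c : Kˣ) :
    milnorSymbol (Function.update a i (b * c)) =
      milnorSymbol (Function.update a i b) + milnorSymbol (Function.update a i c) := by
  unfold milnorSymbol
  rw [ofMul_comp_update, ofMul_comp_update, ofMul_comp_update]
  rw [show Additive.ofMul (b * c) = Additive.ofMul b + Additive.ofMul c from rfl]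
  rw [MultilinearMap.map_update_add]
  exact Submodule.Quotient.mk_add _

private lemma milnorSymbol_update_one (a : Fin m → Kˣ) (i : Fin m) :
    milnorSymbol (Function.update a i 1) = 0 := by
  unfold milnorSymbol
  rw [ofMul_comp_update]
  rw [MultilinearMap.map_coord_zero (f := PiTensorProduct.tprod ℤ) (i := i) (by simp)]
  rfl

private lemma milnorSymbol_update_inv (a : Fin m → Kˣ) (i : Fin m) (b : Kˣ) :
    milnorSymbol (Function.update a i b⁻¹) = - milnorSymbol (Function.update a i b) := by
  have h := milnorSymbol_update_mul a i b b⁻¹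
  rw [mul_inv_cancel, milnorSymbol_update_one] at h
  exact eq_neg_of_add_eq_zero_right h.symm

private lemma milnorSymbol_mem_closure (S : Set Kˣ)
    (hS : ∀ ρ : Kˣ, ∃ v ∈ S, ∃ w ∈ S, ρ = v * w⁻¹) (a : Fin m → Kˣ) :
    milnorSymbol a ∈ AddSubgroup.closure
      {x : MilnorK m K | ∃ b : Fin m → Kˣ, (∀ i, b i ∈ S) ∧ x = milnorSymbol b} := by
  suffices h : ∀ j : ℕ, ∀ a : Fin m → Kˣ, (∀ i : Fin m, j ≤ (i : ℕ) → a i ∈ S) →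
      milnorSymbol a ∈ AddSubgroup.closure
        {x : MilnorK m K | ∃ b : Fin m → Kˣ, (∀ i, b i ∈ S) ∧ x = milnorSymbol b} by
    exact h m a (fun i hi => absurd hi (Nat.not_le.mpr i.isLt))
  intro j
  induction j with
  | zero => exact fun a ha => AddSubgroup.subset_closure ⟨a, fun i => ha i (Nat.zero_le _), rfl⟩
  | succ j ih =>
    intro a ha
    by_cases hj : j < m
    · set i : Fin m := ⟨j, hj⟩ with hidef
      obtain ⟨v, hv, w, hw, hvw⟩ := hS (a i)
      have ha' : a = Function.update a i (v * w⁻¹) := by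
        rw [← hvw, Function.update_eq_self]
      rw [ha', milnorSymbol_update_mul, milnorSymbol_update_inv]
      have hcond : ∀ (c : Kˣ), c ∈ S → ∀ i' : Fin m, j ≤ (i' : ℕ) →
          Function.update a i c i' ∈ S := by
        intro c hc i' hi'
        by_cases h : i' = i
        · subst h; simpa using hc
        · rw [Function.update_of_ne h]
          refine ha i' ?_
          have : (i' : ℕ) ≠ j := fun hc' => h (Fin.ext (by simp [hidef, hc']))
          omega
      exact AddSubgroup.add_mem _ (ih _ (hcond v hv)) (AddSubgroup.neg_mem _ (ih _ (hcond w hw)))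
    · exact ih a (fun i hi => absurd hi (Nat.not_le.mpr (lt_of_lt_of_le i.isLt (Nat.not_lt.mp hj))))

private lemma milnor_mem_closure (hm : 0 < m) (S : Set Kˣ)
    (hS : ∀ ρ : Kˣ, ∃ v ∈ S, ∃ w ∈ S, ρ = v * w⁻¹) (ξ : MilnorK m K) :
    ξ ∈ AddSubgroup.closure
      {x : MilnorK m K | ∃ b : Fin m → Kˣ, (∀ i, b i ∈ S) ∧ x = milnorSymbol b} := by
  obtain ⟨z, rfl⟩ := Submodule.Quotient.mk_surjective _ ξ
  induction z using PiTensorProduct.induction_on with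
  | smul_tprod r f =>
    set a : Fin m → Kˣ := fun i => Additive.toMul (f i) with hadef
    have hf : f = fun i => Additive.ofMul (a i) := rfl
    set i0 : Fin m := ⟨0, hm⟩
    have key : r • PiTensorProduct.tprod ℤ f =
        PiTensorProduct.tprod ℤ
          (fun j => Additive.ofMul ((Function.update a i0 (a i0 ^ r)) j)) := by
      rw [ofMul_comp_update, ofMul_zpow, MultilinearMap.map_update_smul, hf]
      rw [show Function.update (fun j => Additive.ofMul (a j)) i0 (Additive.ofMul (a i0)) =
        (fun j => Additive.ofMul (a j)) from Function.update_eq_self _ _]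
    rw [key]
    exact milnorSymbol_mem_closure S hS (Function.update a i0 (a i0 ^ r))
  | add x y hx hy =>
    rw [Submodule.Quotient.mk_add]
    exact AddSubgroup.add_mem _ hx hy

end MilnorAlgebra

/-- Remark after Proposition `introcoker`.  With `C`, `D`, `e`, `n`
and `S̃` as in Statement 0, for every `n' = m + 1 ≥ 3` the map
`K^M_{n'}(F) → ∐_{P ∉ S̃} K^M_{n'-1}(k(P))` induced by the tame symbols on Milnor
K-theory is surjective. -/
theorem statement1 (k F : Type) [Field k] [Field F] [Algebra k F]
    {Pt : Type} (res : Pt → Type) [∀ P, Field (res P)] [∀ P, Algebra k (res P)]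
    (ord : Pt → F → ℤ) (ev : ∀ P, F → res P)
    (L : (Pt →₀ ℤ) → Submodule k F) (t : ℕ)
    (hC : IsProjCurve k F res ord ev L t)
    (D : Pt →₀ ℤ) (e : ℤ) (he : divDeg k res D = e) (he1 : 1 ≤ e)
    (n : ℤ) (hn : 2 * (t : ℤ) + e - 2 < n * e)
    (hnmin : ∀ m : ℤ, 2 * (t : ℤ) + e - 2 < m * e → n ≤ m)
    (Stilde : Set Pt)
    (hSt : Stilde = {P | D P ≠ 0} ∪ {P | L (n • D - Finsupp.single P 1) ≠ ⊥})
    (m : ℕ) (hm : 2 ≤ m)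
    (bd : ∀ P : Pt, MilnorK (m + 1) F →+ MilnorK m (res P))
    (hbd : ∀ P, IsMilnorBoundary (ord P) (ev P) (bd P)) :
    ∀ y : Π₀ P : Pt, MilnorK m (res P),
      ∃ x : MilnorK (m + 1) F, ∀ P ∉ Stilde, bd P x = y P := by
  classical
  -- degree of a point
  set deg : Pt → ℤ := fun P => (Module.finrank k (res P) : ℤ) with hdeg_def
  -- basic integer facts
  have hepos : (0:ℤ) < e := by linarith
  have hne : 2 * (t : ℤ) + e - 1 ≤ n * e := by omega
  -- membership in the complement of Stilde
  have hmemSt : ∀ P, P ∉ Stilde → D P = 0 ∧ L (n • D - Finsupp.single P 1) = ⊥ := by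
    intro P hP
    rw [hSt] at hP
    simp only [Set.mem_union, Set.mem_setOf_eq] at hP
    push_neg at hP
    exact hP
  -- divDeg computation lemmas
  have hdeg_sum : ∀ (E : Pt →₀ ℤ) (s : Finset Pt), E.support ⊆ s →
      divDeg k res E = ∑ P ∈ s, deg P * E P := by
    intro E s hs
    refine finsum_eq_sum_of_support_subset _ ?_
    intro P hP
    simp only [Function.mem_support] at hP
    have : E P ≠ 0 := fun h => hP (by simp [h])
    exact hs (Finsupp.mem_support_iff.mpr this)
  have hdd_add : ∀ A B : Pt →₀ ℤ, divDeg k res (A + B) = divDeg k res A + divDeg k res B := by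
    intro A B
    rw [hdeg_sum A (A.support ∪ B.support) (Finset.subset_union_left),
        hdeg_sum B (A.support ∪ B.support) (Finset.subset_union_right),
        hdeg_sum (A + B) (A.support ∪ B.support) Finsupp.support_add,
        ← Finset.sum_add_distrib]
    refine Finset.sum_congr rfl fun P _ => ?_
    rw [Finsupp.add_apply, mul_add]
  have hdd_smul : ∀ (z : ℤ) (A : Pt →₀ ℤ), divDeg k res (z • A) = z * divDeg k res A := by
    intro z A
    rw [hdeg_sum A A.support le_rfl, hdeg_sum (z • A) A.support Finsupp.support_smul,
        Finset.mul_sum]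
    refine Finset.sum_congr rfl fun P _ => ?_
    rw [Finsupp.smul_apply, smul_eq_mul]
    ring
  have hdd_single : ∀ (P : Pt) (c : ℤ), divDeg k res (Finsupp.single P c) = deg P * c := by
    intro P c
    rw [hdeg_sum _ {P} Finsupp.support_single_subset, Finset.sum_singleton,
        Finsupp.single_eq_same]
  have hdd_sub : ∀ A B : Pt →₀ ℤ, divDeg k res (A - B) = divDeg k res A - divDeg k res B := by
    intro A B
    rw [sub_eq_add_neg, hdd_add, show (-B) = (-1 : ℤ) • B by module, hdd_smul]
    ring
  have hdd_D : ∀ z : ℤ, divDeg k res (z • D) = z * e := by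
    intro z; rw [hdd_smul, he]
  have happ2 : ∀ (z c1 : ℤ) (R1 X : Pt),
      ((z • D - Finsupp.single R1 c1 : Pt →₀ ℤ)) X
        = z * D X - (if R1 = X then c1 else 0) := by
    intro z c1 R1 X
    rw [Finsupp.sub_apply, Finsupp.smul_apply, Finsupp.single_apply, smul_eq_mul]
  have happ3 : ∀ (z c1 c2 : ℤ) (R1 R2 X : Pt),
      ((z • D - Finsupp.single R1 c1 - Finsupp.single R2 c2 : Pt →₀ ℤ)) X
        = z * D X - (if R1 = X then c1 else 0) - (if R2 = X then c2 else 0) := by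
    intro z c1 c2 R1 R2 X
    rw [Finsupp.sub_apply, Finsupp.sub_apply, Finsupp.smul_apply, Finsupp.single_apply,
      Finsupp.single_apply, smul_eq_mul]
  -- nonzero elements of L E force the degree of E to be nonnegative
  have hL_deg : ∀ (E : Pt →₀ ℤ) (f : F), f ≠ 0 → f ∈ L E → 0 ≤ divDeg k res E := by
    intro E f hf hfL
    have hfin := hC.support_finite f hf
    set s : Finset Pt := E.support ∪ hfin.toFinset with hs_def
    have h1 : divDeg k res E = ∑ P ∈ s, deg P * E P :=
      hdeg_sum E s Finset.subset_union_left
    have h2 : ∑ P ∈ s, deg P * ord P f = 0 := by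
      rw [← finsum_eq_sum_of_support_subset (fun P => deg P * ord P f)
        (by
          intro P hP
          simp only [Function.mem_support] at hP
          have : ord P f ≠ 0 := fun h => hP (by simp [h])
          exact Finset.mem_union_right _ (hfin.mem_toFinset.mpr this))]
      exact hC.degree_formula f hf
    have h3 : divDeg k res E = ∑ P ∈ s, deg P * (E P + ord P f) := by
      rw [h1, ← add_zero (∑ P ∈ s, deg P * E P), ← h2, ← Finset.sum_add_distrib]
      exact Finset.sum_congr rfl fun P _ => by ring
    rw [h3]
    refine Finset.sum_nonneg fun P _ => mul_nonneg ?_ ((hC.mem_L E f).mp hfL hf P)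
    exact Int.natCast_nonneg _
  -- positivity of point degrees
  have hdegpos : ∀ P, 1 ≤ deg P := by
    intro P
    haveI := hC.finiteDimensional_res P
    have h : 0 < Module.finrank k (res P) := Module.finrank_pos
    simp only [hdeg_def]
    exact_mod_cast h
  have htnn : (0:ℤ) ≤ t := Int.natCast_nonneg t
  -- degree bound for points outside Stilde
  have hdQ : ∀ Q, Q ∉ Stilde → n * e + 1 - t ≤ deg Q := by
    intro Q hQ
    have h0 := hC.rr_ineq (n • D - Finsupp.single Q 1)
    rw [(hmemSt Q hQ).2, hdd_sub, hdd_D, hdd_single] at h0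
    rw [finrank_bot] at h0
    push_cast at h0
    linarith
  -- the level function μ
  have hmuex : ∀ P, ∃ μ : ℤ, P ∉ Stilde →
      (n ≤ μ ∧ L (μ • D - Finsupp.single P 1) = ⊥ ∧
        L ((μ + 1) • D - Finsupp.single P 1) ≠ ⊥ ∧
        ∀ r : ℤ, n ≤ r → L ((r + 1) • D - Finsupp.single P 1) ≠ ⊥ → μ ≤ r) := by
    intro P
    by_cases hP : P ∈ Stilde
    · exact ⟨0, fun h => absurd hP h⟩
    · have hinh : ∃ r : ℤ, n ≤ r ∧ L ((r + 1) • D - Finsupp.single P 1) ≠ ⊥ := by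
        refine ⟨max n (deg P + t), le_max_left _ _, fun hbot => ?_⟩
        have h0 := hC.rr_ineq ((max n (deg P + t) + 1) • D - Finsupp.single P 1)
        rw [hbot, hdd_sub, hdd_D, hdd_single] at h0
        rw [finrank_bot] at h0
        push_cast at h0
        have h1 : deg P + t ≤ max n (deg P + t) := le_max_right n (deg P + t)
        have h2 : (0:ℤ) ≤ (max n (deg P + t) + 1) * (e - 1) := by
          refine mul_nonneg ?_ (by linarith)
          linarith [hdegpos P]
        nlinarith
      obtain ⟨μ, ⟨hμ1, hμ2⟩, hμ3⟩ := Int.exists_least_of_bdd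
        (P := fun r => n ≤ r ∧ L ((r + 1) • D - Finsupp.single P 1) ≠ ⊥)
        ⟨n, fun z hz => hz.1⟩ hinh
      refine ⟨μ, fun hP' => ⟨hμ1, ?_, hμ2, fun r hr h => hμ3 r ⟨hr, h⟩⟩⟩
      rcases eq_or_lt_of_le hμ1 with heq | hlt
      · rw [← heq]
        exact (hmemSt P hP).2
      · by_contra hne'
        have := hμ3 (μ - 1) ⟨by omega, by rwa [show μ - 1 + 1 = μ by ring]⟩
        omega
  choose μf hμf using hmuex
  -- main induction on the level
  have MAIN : ∀ N : ℕ, ∀ P, P ∉ Stilde → (μf P - n).toNat ≤ N →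
      ∀ ξ : MilnorK m (res P), ∃ x : MilnorK (m+1) F,
        bd P x = ξ ∧ ∀ Q, Q ∉ Stilde → Q ≠ P → bd Q x = 0 := by
    intro N
    induction N using Nat.strong_induction_on with
    | _ N IH =>
    intro P hP hμN ξ
    obtain ⟨hPD, hPL⟩ := hmemSt P hP
    obtain ⟨hμn, hμ0, hμ1, hμmin⟩ := hμf P hP
    have hdP := hdQ P hP
    have hμe_le : μf P * e ≤ deg P + t - 1 := by
      have h0 := hC.rr_ineq (μf P • D - Finsupp.single P 1)
      rw [hμ0, hdd_sub, hdd_D, hdd_single] at h0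
      rw [finrank_bot] at h0
      push_cast at h0
      linarith
    obtain ⟨h, hhL, hh0⟩ := (Submodule.ne_bot_iff _).mp hμ1
    have hμ1e_ge : deg P ≤ μf P * e + e := by
      have h0 := hL_deg _ h hh0 hhL
      rw [hdd_sub, hdd_D, hdd_single] at h0
      nlinarith
    have hμe_ge : n * e ≤ μf P * e := mul_le_mul_of_nonneg_right hμn hepos.le
    have hmemh := (hC.mem_L _ h).mp hhL hh0
    have hordPh_ge : 1 ≤ ord P h := by
      have h1 := hmemh P
      rw [happ2, hPD, if_pos rfl] at h1
      omega
    have hordPh : ord P h = 1 := by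
      by_contra hne2
      have h2 : 2 ≤ ord P h := by omega
      have hmem2 : h ∈ L ((μf P + 1) • D - Finsupp.single P 2) := by
        rw [hC.mem_L]
        intro _ X
        have h1 := hmemh X
        rw [happ2] at h1
        rw [happ2]
        by_cases hX : P = X
        · subst hX
          rw [if_pos rfl] at h1 ⊢
          rw [hPD] at h1 ⊢
          simp only [mul_zero] at h1 ⊢
          omega
        · rw [if_neg hX] at h1 ⊢
          omega
      have h3 := hL_deg _ h hh0 hmem2
      rw [hdd_sub, hdd_D, hdd_single] at h3
      nlinarith
    have hordQh : ∀ Q, Q ∉ Stilde → Q ≠ P → ord Q h = 0 := by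
      intro Q hQ hQP
      have h1 := hmemh Q
      rw [happ2, (hmemSt Q hQ).1, if_neg (fun hc => hQP hc.symm)] at h1
      by_contra hne2
      have h2 : 1 ≤ ord Q h := by omega
      have hmem3 : h ∈ L ((μf P + 1) • D - Finsupp.single P 1 - Finsupp.single Q 1) := by
        rw [hC.mem_L]
        intro _ X
        have h1' := hmemh X
        rw [happ2] at h1'
        rw [happ3]
        by_cases hX : Q = X
        · subst hX
          rw [(hmemSt Q hQ).1, if_neg (fun hc : P = Q => hQP hc.symm), if_pos rfl, mul_zero]
          rw [(hmemSt Q hQ).1, if_neg (fun hc : P = Q => hQP hc.symm), mul_zero] at h1'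
          omega
        · rw [if_neg hX]
          omega
      have h3 := hL_deg _ h hh0 hmem3
      rw [hdd_sub, hdd_sub, hdd_D, hdd_single, hdd_single] at h3
      have h4 := hdQ Q hQ
      nlinarith
    -- the space L(μ • D) and evaluation at P
    have hLD_ord : ∀ f : F, f ∈ L (μf P • D) → f ≠ 0 → ∀ Q, Q ∉ Stilde → 0 ≤ ord Q f := by
      intro f hf hf0 Q hQ
      have h1 := (hC.mem_L _ f).mp hf hf0 Q
      rw [Finsupp.smul_apply, (hmemSt Q hQ).1, smul_eq_mul, mul_zero, zero_add] at h1
      exact h1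
    have hev_neg : ∀ (Q : Pt) (f : F), f ≠ 0 → 0 ≤ ord Q f → ev Q (-f) = - ev Q f := by
      intro Q f hf0 hford
      have hm1F : (-1 : F) = algebraMap k F (-1) := by simp
      have hm1ne : (-1 : F) ≠ 0 := by norm_num
      have hord1 : ord Q (-1 : F) = 0 := by
        rw [hm1F]; exact hC.ord_algebraMap Q (-1) (by norm_num)
      have hneg : -f = (-1 : F) * f := by ring
      rw [hneg, hC.ev_mul Q _ f hm1ne hf0 (le_of_eq hord1.symm) hford, hm1F,
        hC.ev_algebraMap]
      simp
    have hevP_add : ∀ f g : F, f ∈ L (μf P • D) → g ∈ L (μf P • D) →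
        ev P (f + g) = ev P f + ev P g := by
      intro f g hf hg
      by_cases hf0 : f = 0
      · simp [hf0, hC.ev_zero]
      by_cases hg0 : g = 0
      · simp [hg0, hC.ev_zero]
      by_cases hfg : f + g = 0
      · have hgf : g = -f := by linear_combination hfg
        rw [hfg, hC.ev_zero, hgf, hev_neg P f hf0 (hLD_ord f hf hf0 P hP)]
        ring
      · exact hC.ev_add P f g hf0 hg0 (hLD_ord f hf hf0 P hP) (hLD_ord g hg hg0 P hP)
    have hevP_smul : ∀ (c : k) (f : F), f ∈ L (μf P • D) →
        ev P (c • f) = c • ev P f := by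
      intro c f hf
      by_cases hc : c = 0
      · simp [hc, hC.ev_zero]
      by_cases hf0 : f = 0
      · simp [hf0, hC.ev_zero]
      · have hsd : c • f = algebraMap k F c * f := Algebra.smul_def c f
        have hcne : algebraMap k F c ≠ 0 :=
          fun hcon => hc ((algebraMap k F).injective (by rw [hcon, map_zero]))
        rw [hsd, hC.ev_mul P _ f hcne hf0
          (le_of_eq (hC.ord_algebraMap P c hc).symm) (hLD_ord f hf hf0 P hP),
          hC.ev_algebraMap, ← Algebra.smul_def]
    haveI := hC.finiteDimensional_L (μf P • D)
    haveI := hC.finiteDimensional_res P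
    set Φ : L (μf P • D) →ₗ[k] res P :=
      { toFun := fun f => ev P f.1
        map_add' := fun f g => hevP_add f.1 g.1 f.2 g.2
        map_smul' := fun c f => hevP_smul c f.1 f.2 } with hΦdef
    have hΦzero : ∀ f : F, ∀ hf : f ∈ L (μf P • D), ev P f = 0 → f = 0 := by
      intro f hf hev0
      by_contra hf0
      have hford := hLD_ord f hf hf0 P hP
      have hord1 : 0 < ord P f := (hC.ev_eq_zero_iff P f hf0 hford).mp hev0
      have hmem4 : f ∈ L (μf P • D - Finsupp.single P 1) := by
        rw [hC.mem_L]
        intro _ X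
        have h1 := (hC.mem_L _ f).mp hf hf0 X
        rw [Finsupp.smul_apply, smul_eq_mul] at h1
        rw [happ2]
        by_cases hX : P = X
        · subst hX
          rw [if_pos rfl, hPD, mul_zero]
          rw [hPD, mul_zero] at h1
          omega
        · rw [if_neg hX]
          omega
      rw [hμ0] at hmem4
      exact hf0 (Submodule.mem_bot k |>.mp hmem4)
    have hΦinj : Function.Injective Φ := by
      rw [← LinearMap.ker_eq_bot, Submodule.eq_bot_iff]
      rintro ⟨f, hfLD⟩ hker
      have : f = 0 := hΦzero f hfLD hker
      simp [this]
    have hfrV : Module.finrank k (LinearMap.range Φ) = Module.finrank k (L (μf P • D)) :=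
      LinearMap.finrank_range_of_inj hΦinj
    have hrk0 : μf P * e + 1 - t ≤ (Module.finrank k (L (μf P • D)) : ℤ) := by
      have h0 := hC.rr_ineq (μf P • D)
      rw [hdd_D] at h0
      exact h0
    have hrk2 : deg P + 1 ≤ 2 * (Module.finrank k (L (μf P • D)) : ℤ) := by
      linarith
    have hratio : ∀ ρ : (res P)ˣ, ∃ fv : F,
        (fv ∈ L (μf P • D) ∧ fv ≠ 0) ∧ ∃ fw : F, (fw ∈ L (μf P • D) ∧ fw ≠ 0) ∧
          ev P fv = (ρ : res P) * ev P fw := by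
      intro ρ
      set ε : res P ≃ₗ[k] res P :=
        { toFun := fun x => (ρ : res P) * x
          invFun := fun x => ((ρ⁻¹ : (res P)ˣ) : res P) * x
          map_add' := fun a b => mul_add _ a b
          map_smul' := fun c a => mul_smul_comm c _ a
          left_inv := fun a => by simp [← mul_assoc]
          right_inv := fun a => by simp [← mul_assoc] } with hεdef
      set V := LinearMap.range Φ with hVdef
      set Vρ := Submodule.map (ε : res P →ₗ[k] res P) V with hVρdef
      have h1 : Module.finrank k Vρ = Module.finrank k V := LinearEquiv.finrank_map_eq ε V
      have h2 := Submodule.finrank_sup_add_finrank_inf_eq Vρ V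
      have h3 : Module.finrank k ↥(Vρ ⊔ V) ≤ Module.finrank k (res P) :=
        Submodule.finrank_le _
      have h4 : 1 ≤ Module.finrank k ↥(Vρ ⊓ V) := by
        have h5 : Module.finrank k (res P) + 1 ≤ 2 * Module.finrank k ↥(L (μf P • D)) := by
          have h6 := hrk2
          simp only [hdeg_def] at h6
          exact_mod_cast h6
        omega
      have hne_bot : Vρ ⊓ V ≠ ⊥ := by
        intro hbot
        rw [hbot] at h4
        rw [finrank_bot] at h4
        omega
      obtain ⟨v, hv, hv0⟩ := (Submodule.ne_bot_iff _).mp hne_bot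
      obtain ⟨hvρ, hvV⟩ := hv
      obtain ⟨v0, hv0V, hεv0⟩ := hvρ
      obtain ⟨fv, hfv⟩ := hvV
      obtain ⟨fw, hfw⟩ := hv0V
      have hfv_ne : (fv : F) ≠ 0 := by
        intro hc
        apply hv0
        rw [← hfv]
        show ev P (fv : F) = 0
        rw [hc, hC.ev_zero]
      have hv0ne : v0 ≠ 0 := by
        intro hc
        apply hv0
        rw [← hεv0, hc]
        show (ρ : res P) * 0 = 0
        rw [mul_zero]
      have hfw_ne : (fw : F) ≠ 0 := by
        intro hc
        apply hv0ne
        rw [← hfw]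
        show ev P (fw : F) = 0
        rw [hc, hC.ev_zero]
      refine ⟨fv, ⟨fv.2, hfv_ne⟩, fw, ⟨fw.2, hfw_ne⟩, ?_⟩
      show ev P (fv : F) = (ρ : res P) * ev P (fw : F)
      have : Φ fv = v := hfv
      have h6 : Φ fw = v0 := hfw
      rw [show ev P (fv : F) = Φ fv from rfl, show ev P (fw : F) = Φ fw from rfl, hfv, h6,
        ← hεv0]
      rfl
-- the solution set
    set SolSet : Set (MilnorK m (res P)) :=
      {ξ' | ∃ x : MilnorK (m+1) F, bd P x = ξ' ∧ ∀ Q, Q ∉ Stilde → Q ≠ P → bd Q x = 0}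
      with hSolSet
    have hSol_zero : (0 : MilnorK m (res P)) ∈ SolSet :=
      ⟨0, map_zero _, fun Q _ _ => map_zero _⟩
    have hSol_add : ∀ ξ₁ ξ₂, ξ₁ ∈ SolSet → ξ₂ ∈ SolSet → ξ₁ + ξ₂ ∈ SolSet := by
      rintro ξ₁ ξ₂ ⟨x₁, hx₁, hx₁'⟩ ⟨x₂, hx₂, hx₂'⟩
      exact ⟨x₁ + x₂, by rw [map_add, hx₁, hx₂], fun Q hQ hQP => by
        rw [map_add, hx₁' Q hQ hQP, hx₂' Q hQ hQP, add_zero]⟩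
    have hSol_neg : ∀ ξ', ξ' ∈ SolSet → -ξ' ∈ SolSet := by
      rintro ξ' ⟨x₁, hx₁, hx₁'⟩
      exact ⟨-x₁, by rw [map_neg, hx₁], fun Q hQ hQP => by
        rw [map_neg, hx₁' Q hQ hQP, neg_zero]⟩
    set Sol : AddSubgroup (MilnorK m (res P)) :=
      { carrier := SolSet
        zero_mem' := hSol_zero
        add_mem' := fun {a b} ha hb => hSol_add a b ha hb
        neg_mem' := fun {a} ha => hSol_neg a ha } with hSoldef
    -- the generating set of residues
    set SVu : Set (res P)ˣ :=
      {b | ∃ f : F, f ∈ L (μf P • D) ∧ f ≠ 0 ∧ ev P f = (b : res P)} with hSVudef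
    have hS : ∀ ρ : (res P)ˣ, ∃ v ∈ SVu, ∃ w ∈ SVu, ρ = v * w⁻¹ := by
      intro ρ
      obtain ⟨fv, ⟨hfvL, hfv0⟩, fw, ⟨hfwL, hfw0⟩, hvw⟩ := hratio ρ
      have hew : ev P fw ≠ 0 := fun hc => hfw0 (hΦzero fw hfwL hc)
      have hev : ev P fv ≠ 0 := by
        rw [hvw]
        exact mul_ne_zero (Units.ne_zero ρ) hew
      refine ⟨Units.mk0 (ev P fv) hev, ⟨fv, hfvL, hfv0, rfl⟩,
        Units.mk0 (ev P fw) hew, ⟨fw, hfwL, hfw0, rfl⟩, ?_⟩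
      refine Units.ext ?_
      simp only [Units.val_mul, Units.val_mk0]
      rw [show ((Units.mk0 (ev P fw) hew)⁻¹ : (res P)ˣ) = Units.mk0 (ev P fw)⁻¹ (by
        exact inv_ne_zero hew) from by
          ext
          simp]
      simp only [Units.val_mk0]
      rw [hvw, mul_assoc, mul_inv_cancel₀ hew, mul_one]
    -- generator symbols are solvable
    have hgen : ∀ a : Fin m → (res P)ˣ, (∀ i, a i ∈ SVu) → milnorSymbol a ∈ SolSet := by
      intro a haS
      choose f hfL hf0 hfev using fun i => (haS i)
      have hordPf : ∀ i, ord P (f i) = 0 := by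
        intro i
        have h1 := hLD_ord (f i) (hfL i) (hf0 i) P hP
        have h2 : ev P (f i) ≠ 0 := by rw [hfev i]; exact Units.ne_zero (a i)
        have h3 : ¬ (0 < ord P (f i)) := fun hlt =>
          h2 ((hC.ev_eq_zero_iff P (f i) (hf0 i) h1).mpr hlt)
        omega
      set uf : Fin m → Fˣ := fun i => Units.mk0 (f i) (hf0 i) with hufdef
      set uh : Fˣ := Units.mk0 h hh0 with huhdef
      have hbdP : bd P (milnorSymbol (Fin.snoc uf uh)) = milnorSymbol a := by
        refine (hbd P).2 uf uh ?_ (fun i => hordPf i) a (fun i => (hfev i).symm)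
        exact hordPh
      set Bset : Set Pt := {Q | Q ∉ Stilde ∧ Q ≠ P ∧ ∃ i, ord Q (f i) ≠ 0} with hBdef
      have hBfin : Bset.Finite := by
        refine Set.Finite.subset
          (Set.finite_iUnion (fun i : Fin m => hC.support_finite (f i) (hf0 i))) ?_
        rintro Q ⟨_, _, i, hi⟩
        exact Set.mem_iUnion.mpr ⟨i, hi⟩
      have hcorr : ∀ Q, Q ∈ Bset → ∃ xQ : MilnorK (m+1) F,
          bd Q xQ = bd Q (milnorSymbol (Fin.snoc uf uh)) ∧
          ∀ Q', Q' ∉ Stilde → Q' ≠ Q → bd Q' xQ = 0 := by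
        rintro Q ⟨hQSt, hQP, i, hiQ⟩
        have hiQ1 : 1 ≤ ord Q (f i) := by
          have := hLD_ord (f i) (hfL i) (hf0 i) Q hQSt
          omega
        have hmem5 : f i ∈ L (μf P • D - Finsupp.single Q 1) := by
          rw [hC.mem_L]
          intro _ X
          have h1 := (hC.mem_L _ (f i)).mp (hfL i) (hf0 i) X
          rw [Finsupp.smul_apply, smul_eq_mul] at h1
          rw [happ2]
          by_cases hX : Q = X
          · subst hX
            rw [if_pos rfl, (hmemSt Q hQSt).1, mul_zero]
            rw [(hmemSt Q hQSt).1, mul_zero] at h1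
            omega
          · rw [if_neg hX]
            omega
        have hQnbot : L (μf P • D - Finsupp.single Q 1) ≠ ⊥ := by
          intro hbot
          rw [hbot] at hmem5
          exact hf0 i (Submodule.mem_bot k |>.mp hmem5)
        have hμgt : n < μf P := by
          rcases eq_or_lt_of_le hμn with heq | hlt
          · exfalso
            rw [← heq] at hQnbot
            exact hQnbot (hmemSt Q hQSt).2
          · exact hlt
        obtain ⟨hQn, hQ0, hQ1, hQmin⟩ := hμf Q hQSt
        have hltQ : μf Q ≤ μf P - 1 := by
          refine hQmin (μf P - 1) (by omega) ?_
          rw [show μf P - 1 + 1 = μf P by ring]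
          exact hQnbot
        exact IH ((μf Q - n).toNat) (by omega) Q hQSt le_rfl
          (bd Q (milnorSymbol (Fin.snoc uf uh)))
      choose xQ hxQ1 hxQ2 using hcorr
      refine ⟨milnorSymbol (Fin.snoc uf uh) -
        ∑ Q ∈ hBfin.toFinset.attach, xQ Q.1 (hBfin.mem_toFinset.mp Q.2), ?_, ?_⟩
      · rw [map_sub, hbdP, map_sum, Finset.sum_eq_zero, sub_zero]
        intro Q _
        refine hxQ2 Q.1 _ P hP ?_
        intro hc
        exact (hBfin.mem_toFinset.mp Q.2).2.1 hc.symm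
      · intro Q' hQ' hQ'P
        rw [map_sub, map_sum]
        by_cases hQ'B : Q' ∈ Bset
        · rw [Finset.sum_eq_single_of_mem ⟨Q', hBfin.mem_toFinset.mpr hQ'B⟩
            (Finset.mem_attach _ _) ?_]
          · rw [hxQ1, sub_self]
          · intro b _ hbne
            refine hxQ2 b.1 _ Q' hQ' ?_
            intro hc
            exact hbne (Subtype.ext hc.symm)
        · have hzero : bd Q' (milnorSymbol (Fin.snoc uf uh)) = 0 := by
            refine (hbd Q').1 (Fin.snoc uf uh) ?_
            intro j
            refine Fin.lastCases ?_ ?_ j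
            · simpa [huhdef] using hordQh Q' hQ' hQ'P
            · intro i
              simp only [Fin.snoc_castSucc, hufdef, Units.val_mk0]
              by_contra hc
              exact hQ'B ⟨hQ', hQ'P, i, hc⟩
          rw [hzero, Finset.sum_eq_zero, sub_zero]
          intro b _
          refine hxQ2 b.1 _ Q' hQ' ?_
          intro hc
          apply hQ'B
          rw [hc]
          exact hBfin.mem_toFinset.mp b.2
    -- conclude via the closure
    have hclos := milnor_mem_closure (K := res P) (m := m) (by omega : 0 < m) SVu hS ξ
    have hsub : {x : MilnorK m (res P) |
        ∃ b : Fin m → (res P)ˣ, (∀ i, b i ∈ SVu) ∧ x = milnorSymbol b} ⊆ (Sol : Set _) := by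
      rintro x ⟨b, hb, rfl⟩
      exact hgen b hb
    exact (AddSubgroup.closure_le Sol).mpr hsub hclos
-- final assembly
  intro y
  have hx : ∀ P : Pt, ∃ xP : MilnorK (m+1) F,
      (P ∉ Stilde → bd P xP = y P) ∧ ∀ Q, Q ∉ Stilde → Q ≠ P → bd Q xP = 0 := by
    intro P
    by_cases hP : P ∉ Stilde
    · obtain ⟨x, hx1, hx2⟩ := MAIN ((μf P - n).toNat) P hP le_rfl (y P)
      exact ⟨x, fun _ => hx1, hx2⟩
    · exact ⟨0, fun h => absurd h hP, fun Q _ _ => map_zero _⟩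
  choose g hg1 hg2 using hx
  refine ⟨∑ P ∈ y.support, g P, ?_⟩
  intro P hP
  rw [map_sum]
  by_cases hPs : P ∈ y.support
  · rw [Finset.sum_eq_single_of_mem P hPs]
    · exact hg1 P hP
    · intro b _ hbne
      exact hg2 b P hP (Ne.symm hbne)
  · rw [DFinsupp.notMem_support_iff.mp hPs]
    refine Finset.sum_eq_zero ?_
    intro b hb
    refine hg2 b P hP ?_
    intro hc
    rw [← hc] at hb
    exact hPs hb

end
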